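/- Let j : Y ⟶ X be a morphism of locally ringed spaces such that the underlying continuous map j₀ is a closed topological embedding and every stalk map j♯_y : O_{X,j₀(y)} → O_{Y,y} is surjective. If j is a tidy morphism, then the locally ringed space Y is tidy, i.e. for every open V ⊆ Y, every g ∈ O_Y(V), and every y ∈ V: if for all y' ∈ V and all N ∈ ℕ the germ of g at y' lies in m_{Y,y'}^N, then the germ of g at y is 0. -/

import Mathlib

open AlgebraicGeometry CategoryTheory TopologicalSpace Opposite

/-- A morphism of locally ringed spaces is *tidy* if, for every open `U` in the target,
every section `f` over `U` and every point `w` of the source mapping into `U`: if at every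
point `w'` mapping into `U` and every `N` the germ of `f` lies in `ker(φ♯_{w'}) + m^N`,
then the germ of `f` at the image of `w` lies in `ker(φ♯_w)`. -/
def TidyMorphism {W X : LocallyRingedSpace} (φ : W ⟶ X) : Prop :=
  ∀ (U : Opens X) (f : X.presheaf.obj (op U)) (w : W) (hw : φ.base w ∈ U),
    (∀ (w' : W) (hw' : φ.base w' ∈ U) (N : ℕ),
      X.presheaf.germ U (φ.base w') hw' f ∈
        RingHom.ker (φ.stalkMap w').hom +
          (IsLocalRing.maximalIdeal (X.presheaf.stalk (φ.base w'))) ^ N) →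
    X.presheaf.germ U (φ.base w) hw f ∈ RingHom.ker (φ.stalkMap w).hom

/-- For a surjective local homomorphism of local rings, if `f a ∈ m_S ^ N` then
`a ∈ ker f + m_R ^ N`. -/
lemma mem_ker_add_pow_of_map_mem_pow {R S : Type*} [CommRing R] [CommRing S]
    [IsLocalRing R] [IsLocalRing S] (f : R →+* S) (hf : Function.Surjective f)
    [IsLocalHom f] (a : R) (N : ℕ) (h : f a ∈ (IsLocalRing.maximalIdeal S) ^ N) :
    a ∈ RingHom.ker f + (IsLocalRing.maximalIdeal R) ^ N := by
  have hmap : Ideal.map f (IsLocalRing.maximalIdeal R) = IsLocalRing.maximalIdeal S := by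
    apply le_antisymm
    · rw [Ideal.map_le_iff_le_comap]
      intro x hx
      exact fun hu => hx (isUnit_of_map_unit f x hu)
    · intro b hb
      obtain ⟨a, rfl⟩ := hf b
      refine Ideal.mem_map_of_mem f ?_
      intro ha
      exact hb (ha.map f)
  have h1 : f a ∈ Ideal.map f ((IsLocalRing.maximalIdeal R) ^ N) := by
    rw [Ideal.map_pow, hmap]; exact h
  have h2 : a ∈ Ideal.comap f (Ideal.map f ((IsLocalRing.maximalIdeal R) ^ N)) :=
    Ideal.mem_comap.mpr h1
  rw [Ideal.comap_map_of_surjective f hf] at h2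
  rw [Ideal.add_eq_sup, sup_comm]
  simpa [RingHom.ker_eq_comap_bot] using h2

/-- If `j : Y ⟶ X` is a closed embedding of locally ringed spaces with surjective stalk
maps which is a tidy morphism, then `Y` is a tidy locally ringed space. -/
theorem tidySpace_of_tidy_closedEmbedding {Y X : LocallyRingedSpace} (j : Y ⟶ X)
    (hemb : Topology.IsClosedEmbedding j.base)
    (hsurj : ∀ y : Y, Function.Surjective (j.stalkMap y))
    (htidy : TidyMorphism j) :
    ∀ (V : Opens Y) (g : Y.presheaf.obj (op V)) (y : Y) (hy : y ∈ V),
      (∀ (y' : Y) (hy' : y' ∈ V) (N : ℕ),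
        Y.presheaf.germ V y' hy' g ∈
          (IsLocalRing.maximalIdeal (Y.presheaf.stalk y')) ^ N) →
      Y.presheaf.germ V y hy g = 0 := by
  intro V g y hy hmem
  obtain ⟨s, hs⟩ := hsurj y (Y.presheaf.germ V y hy g)
  obtain ⟨U, hU, f, rfl⟩ := TopCat.Presheaf.germ_exist X.presheaf (x := j.base y) s
  have hs' := hs
  rw [LocallyRingedSpace.stalkMap_germ_apply] at hs'
  obtain ⟨W, hyW, iU, iV, heq⟩ := Y.presheaf.germ_eq y hU hy _ _ hs'
  have hCcl : IsClosed (j.base '' (↑W)ᶜ) := hemb.isClosedMap _ W.2.isClosed_compl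
  set U' : Opens X := U ⊓ ⟨(j.base '' (↑W)ᶜ)ᶜ, hCcl.isOpen_compl⟩ with hU'
  have hyU' : j.base y ∈ U' := by
    refine ⟨hU, fun hc => ?_⟩
    obtain ⟨y'', hy'', he⟩ := hc
    exact hy'' (hemb.injective he ▸ hyW)
  have hWmem : ∀ w' : Y, j.base w' ∈ U' → w' ∈ W := by
    intro w' hw'
    by_contra h
    exact hw'.2 ⟨w', h, rfl⟩
  have iU' : U' ⟶ U := homOfLE inf_le_left
  -- the germ of `g` at any point of `W` equals the stalk image of the germ of `f`
  have hgerm : ∀ (w' : Y) (hw : w' ∈ W),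
      j.stalkMap w' (X.presheaf.germ U (j.base w') (iU.le hw) f) =
        Y.presheaf.germ V w' (iV.le hw) g := by
    intro w' hw
    rw [LocallyRingedSpace.stalkMap_germ_apply j U w' (iU.le hw) f]
    have e1 := TopCat.Presheaf.germ_res_apply Y.presheaf iU w' hw (j.c.app (op U) f)
    have e2 := TopCat.Presheaf.germ_res_apply Y.presheaf iV w' hw g
    rw [← e1, heq, e2]
  have key := htidy U' (X.presheaf.map iU'.op f) y hyU' ?_
  · rw [RingHom.mem_ker, TopCat.Presheaf.germ_res_apply] at key
    rw [← hs, key]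
  · intro w' hw' N
    rw [TopCat.Presheaf.germ_res_apply]
    have hwW := hWmem w' hw'
    refine mem_ker_add_pow_of_map_mem_pow (j.stalkMap w').hom (hsurj w') _ N ?_
    rw [hgerm w' hwW]
    exact hmem w' (iV.le hwW) N
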